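/- Fix n ≥ 2. For v ∈ [0,∞)^n let v_(1) and v_(2) denote the largest and second-largest entries of v, respectively. For each ρ ≥ 0 define the revenue function u_ρ : [0,∞)^n → ℝ of the anonymous second-price auction with reserve ρ by u_ρ(v) = max(v_(2), ρ) if v_(1) ≥ ρ, and u_ρ(v) = 0 otherwise. Then the class U = {u_ρ : ρ ≥ 0} has pseudo-dimension at most 2. -/

import Mathlib

attribute [local instance] Classical.propDecidable

/-- The largest entry `v_(1)` of `v ∈ ℝ^n` (`n ≥ 2`). -/
noncomputable def top1 (n : ℕ) (hn : 2 ≤ n) (v : Fin n → ℝ) : ℝ :=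
  Finset.univ.sup' ⟨⟨0, by omega⟩, Finset.mem_univ _⟩ v

/-- The second-largest entry `v_(2)` of `v ∈ ℝ^n` (with multiplicity):
`v_(2) = max_{i ≠ j} min(vᵢ, v_j)`. -/
noncomputable def top2 (n : ℕ) (hn : 2 ≤ n) (v : Fin n → ℝ) : ℝ :=
  (Finset.univ.filter fun p : Fin n × Fin n => p.1 ≠ p.2).sup'
    ⟨(⟨0, by omega⟩, ⟨1, by omega⟩),
      Finset.mem_filter.mpr ⟨Finset.mem_univ _, by simp [Fin.ext_iff]⟩⟩
    fun p => min (v p.1) (v p.2)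

/-- Revenue of the anonymous second-price auction with reserve `ρ`:
`max(v_(2), ρ)` if `v_(1) ≥ ρ`, and `0` otherwise. -/
noncomputable def uSPA (n : ℕ) (hn : 2 ≤ n) (ρ : ℝ) (v : Fin n → ℝ) : ℝ :=
  if ρ ≤ top1 n hn v then max (top2 n hn v) ρ else 0

lemma top2_nonneg (n : ℕ) (hn : 2 ≤ n) (v : Fin n → ℝ) (hv : ∀ i, 0 ≤ v i) :
    0 ≤ top2 n hn v := by
  have hmem : ((⟨0, by omega⟩, ⟨1, by omega⟩) : Fin n × Fin n) ∈
      (Finset.univ.filter fun p : Fin n × Fin n => p.1 ≠ p.2) :=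
    Finset.mem_filter.mpr ⟨Finset.mem_univ _, by simp [Fin.ext_iff]⟩
  refine le_trans ?_ (Finset.le_sup' (fun p : Fin n × Fin n => min (v p.1) (v p.2)) hmem)
  exact le_min (hv _) (hv _)

lemma uSPA_nonneg (n : ℕ) (hn : 2 ≤ n) (ρ : ℝ) (v : Fin n → ℝ) (hv : ∀ i, 0 ≤ v i) :
    0 ≤ uSPA n hn ρ v := by
  rw [uSPA]
  split_ifs
  · exact le_max_of_le_left (top2_nonneg n hn v hv)
  · exact le_refl 0

/-- Order-convexity: for fixed `v`, the set `{ρ : z ≤ u_ρ(v)}` is convex. -/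
lemma uSPA_convex (n : ℕ) (hn : 2 ≤ n) (v : Fin n → ℝ) (hv : ∀ i, 0 ≤ v i)
    (z ρ₁ ρ₂ ρ₃ : ℝ) (h12 : ρ₁ ≤ ρ₂) (h23 : ρ₂ ≤ ρ₃)
    (h1 : z ≤ uSPA n hn ρ₁ v) (h3 : z ≤ uSPA n hn ρ₃ v) :
    z ≤ uSPA n hn ρ₂ v := by
  by_cases hz : z ≤ 0
  · exact le_trans hz (uSPA_nonneg n hn ρ₂ v hv)
  · push_neg at hz
    have h3top : ρ₃ ≤ top1 n hn v := by
      by_contra hcon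
      rw [uSPA, if_neg hcon] at h3
      linarith
    have h2top : ρ₂ ≤ top1 n hn v := le_trans h23 h3top
    have h1top : ρ₁ ≤ top1 n hn v := le_trans h12 h2top
    rw [uSPA, if_pos h1top] at h1
    rw [uSPA, if_pos h2top]
    exact le_trans h1 (max_le_max (le_refl _) h12)

/-- the class `U = {u_ρ : ρ ≥ 0}` of anonymous second-price-auction revenue
functions on `[0,∞)^n` has pseudo-dimension at most 2: every pseudo-shattered finite set
of nonnegative valuation vectors has size at most 2. -/
theorem stmt_15 (n : ℕ) (hn : 2 ≤ n)
    (s : Finset (Fin n → ℝ)) (hs : ∀ v ∈ s, ∀ i, 0 ≤ v i)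
    (hshatter : ∃ z : (Fin n → ℝ) → ℝ, ∀ b : (Fin n → ℝ) → Bool,
      ∃ ρ : ℝ, 0 ≤ ρ ∧ ∀ v ∈ s, (z v ≤ uSPA n hn ρ v ↔ b v = true)) :
    s.card ≤ 2 := by
  by_contra hcard
  push_neg at hcard
  obtain ⟨z, hz⟩ := hshatter
  -- extract three distinct elements of s
  obtain ⟨t, hts, htc⟩ := Finset.exists_subset_card_eq (s := s) (n := 3) hcard
  obtain ⟨a, b, c, hab, hac, hbc, rfl⟩ := Finset.card_eq_three.mp htc
  have ha : a ∈ s := hts (by simp)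
  have hb : b ∈ s := hts (by simp)
  have hc : c ∈ s := hts (by simp)
  -- all-true pattern
  obtain ⟨ρT, -, hT⟩ := hz (fun _ => true)
  have Ta : z a ≤ uSPA n hn ρT a := (hT a ha).mpr rfl
  have Tb : z b ≤ uSPA n hn ρT b := (hT b hb).mpr rfl
  have Tc : z c ≤ uSPA n hn ρT c := (hT c hc).mpr rfl
  -- pattern false only at a
  obtain ⟨ρa, -, hA⟩ := hz (fun v => decide (v ≠ a))
  have fa : ¬ z a ≤ uSPA n hn ρa a := by
    intro h
    have := (hA a ha).mp h
    simp at this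
  have fab : z b ≤ uSPA n hn ρa b := (hA b hb).mpr (by simp [Ne.symm hab])
  have fac : z c ≤ uSPA n hn ρa c := (hA c hc).mpr (by simp [Ne.symm hac])
  -- pattern false only at b
  obtain ⟨ρb, -, hB⟩ := hz (fun v => decide (v ≠ b))
  have fb : ¬ z b ≤ uSPA n hn ρb b := by
    intro h
    have := (hB b hb).mp h
    simp at this
  have fba : z a ≤ uSPA n hn ρb a := (hB a ha).mpr (by simp [hab])
  have fbc : z c ≤ uSPA n hn ρb c := (hB c hc).mpr (by simp [Ne.symm hbc])
  -- pattern false only at c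
  obtain ⟨ρc, -, hC⟩ := hz (fun v => decide (v ≠ c))
  have fc : ¬ z c ≤ uSPA n hn ρc c := by
    intro h
    have := (hC c hc).mp h
    simp at this
  have fca : z a ≤ uSPA n hn ρc a := (hC a ha).mpr (by simp [hac])
  have fcb : z b ≤ uSPA n hn ρc b := (hC b hb).mpr (by simp [hbc])
  -- key: if a point is true at two reserves and false in between, contradiction
  have key : ∀ p ∈ s, ∀ x y w : ℝ, x ≤ y → y ≤ w →
      z p ≤ uSPA n hn x p → z p ≤ uSPA n hn w p → ¬ z p ≤ uSPA n hn y p → False := by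
    intro p hp x y w hxy hyw hx hw hy
    exact hy (uSPA_convex n hn p (hs p hp) (z p) x y w hxy hyw hx hw)
  rcases le_total ρa ρT with h1 | h1 <;> rcases le_total ρb ρT with h2 | h2 <;>
    rcases le_total ρc ρT with h3 | h3
  · rcases le_total ρa ρb with h | h
    · exact key b hb ρa ρb ρT h h2 fab Tb fb
    · exact key a ha ρb ρa ρT h h1 fba Ta fa
  · rcases le_total ρa ρb with h | h
    · exact key b hb ρa ρb ρT h h2 fab Tb fb
    · exact key a ha ρb ρa ρT h h1 fba Ta fa
  · rcases le_total ρa ρc with h | h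
    · exact key c hc ρa ρc ρT h h3 fac Tc fc
    · exact key a ha ρc ρa ρT h h1 fca Ta fa
  · rcases le_total ρb ρc with h | h
    · exact key b hb ρT ρb ρc h2 h Tb fcb fb
    · exact key c hc ρT ρc ρb h3 h Tc fbc fc
  · rcases le_total ρb ρc with h | h
    · exact key c hc ρb ρc ρT h h3 fbc Tc fc
    · exact key b hb ρc ρb ρT h h2 fcb Tb fb
  · rcases le_total ρa ρc with h | h
    · exact key a ha ρT ρa ρc h1 h Ta fca fa
    · exact key c hc ρT ρc ρa h3 h Tc fac fc
  · rcases le_total ρa ρb with h | h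
    · exact key a ha ρT ρa ρb h1 h Ta fba fa
    · exact key b hb ρT ρb ρa h2 h Tb fab fb
  · rcases le_total ρa ρb with h | h
    · exact key a ha ρT ρa ρb h1 h Ta fba fa
    · exact key b hb ρT ρb ρa h2 h Tb fab fb
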